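/- Reduction from Max-Reward-Light (XOS case): Let (A, f, c) be a multi-agent contract instance with XOS f, let B, B' ∈ (0,1] be budgets, let γ ≥ 1, and let L be the set of light agents. Consider the scaled instance on the agent set L with the same reward f (restricted to subsets of L) and costs c'_i = (B'/B)·c_i; its payment function is p'(T) = Σ_{i∈T} c'_i/f_T(i) for T ⊆ L and its profit is g'(T) = (1 − p'(T))·f(T). Let φ' : 2^L → ℝ≥0 be a BEST objective for the scaled instance. Suppose S ⊆ L satisfies p'(S) ≤ B' and γ·φ'(S) ≥ max{φ'(T) : T ⊆ L, p'(T) ≤ B'}. Then there exists a set T ⊆ L with p(T) ≤ B (payment in the original instance), where T = S or T is a singleton, such that 20γ·f(T) ≥ Max-Reward-Light(B). -/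

import Mathlib

open scoped BigOperators ENNReal
open Finset

/-- Marginal contribution of agent `i` to set `S`: `f_S(i) = f(S) - f(S \ {i})`. -/
noncomputable def marginal {α : Type*} [DecidableEq α] (f : Finset α → ℝ) (S : Finset α)
    (i : α) : ℝ :=
  f S - f (S.erase i)

/-- Payment needed to incentivize `S`, valued in `[0,∞]`, with the conventions
`0/0 = 0` and `x/0 = ∞` for `x > 0` (these hold for ENNReal division). -/
noncomputable def payment {α : Type*} [DecidableEq α] (f : Finset α → ℝ) (c : α → ℝ)
    (S : Finset α) : ℝ≥0∞ :=
  ∑ i ∈ S, ENNReal.ofReal (c i) / ENNReal.ofReal (marginal f S i)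

/-- The principal's profit from incentivizing `S`: `g(S) = (1 - p(S)) · f(S)`. -/
noncomputable def profit {α : Type*} [DecidableEq α] (f : Finset α → ℝ) (c : α → ℝ)
    (S : Finset α) : ℝ :=
  (1 - (payment f c S).toReal) * f S

/-- `f` is monotone. -/
def IsMonotoneFn {α : Type*} (f : Finset α → ℝ) : Prop :=
  ∀ ⦃S T : Finset α⦄, S ⊆ T → f S ≤ f T

/-- `f` is subadditive. -/
def IsSubadditive {α : Type*} [DecidableEq α] (f : Finset α → ℝ) : Prop :=
  ∀ S T : Finset α, f (S ∪ T) ≤ f S + f T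

/-- `f` is submodular (decreasing marginal values). -/
def IsSubmodular {α : Type*} [DecidableEq α] (f : Finset α → ℝ) : Prop :=
  ∀ ⦃S T : Finset α⦄, S ⊆ T → ∀ i ∉ T, f (insert i T) - f T ≤ f (insert i S) - f S

/-- `f` is additive. -/
def IsAdditive {α : Type*} [DecidableEq α] (f : Finset α → ℝ) : Prop :=
  ∀ S : Finset α, f S = ∑ i ∈ S, f {i}

/-- `f` is XOS: a finite max of nonnegative additive functions. -/
def IsXOS {α : Type*} (f : Finset α → ℝ) : Prop :=
  ∃ (k : ℕ) (a : Fin (k + 1) → α → ℝ),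
    (∀ j i, 0 ≤ a j i) ∧
    ∀ S : Finset α, f S = Finset.univ.sup' Finset.univ_nonempty (fun j => ∑ i ∈ S, a j i)

/-- Agent `i` is light: it can be incentivized with payment at most `1/2`. -/
def isLight {α : Type*} [DecidableEq α] (f : Finset α → ℝ) (c : α → ℝ) (i : α) : Prop :=
  payment f c {i} ≤ ENNReal.ofReal (1 / 2)

/-- `S` is budget-feasible for budget `B`. -/
def feasible {α : Type*} [DecidableEq α] (f : Finset α → ℝ) (c : α → ℝ) (B : ℝ)
    (S : Finset α) : Prop :=
  payment f c S ≤ ENNReal.ofReal B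

/-- `S` is a budget-feasible set of light agents. -/
def feasibleLight {α : Type*} [DecidableEq α] (f : Finset α → ℝ) (c : α → ℝ) (B : ℝ)
    (S : Finset α) : Prop :=
  (∀ i ∈ S, isLight f c i) ∧ payment f c S ≤ ENNReal.ofReal B

/-- The maximum (supremum) value of objective `φ` over sets satisfying `P`. -/
noncomputable def maxVal {α : Type*} (φ : Finset α → ℝ) (P : Finset α → Prop) : ℝ :=
  sSup (φ '' {S | P S})

/-- `φ` is a BEST objective for the instance `(f, c)`: it is nonnegative, sandwiched between
profit and reward, and satisfies `φ(S) ≤ f(S \ {i}) + φ({i})` for `i ∈ S`. -/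
def IsBEST {α : Type*} [DecidableEq α] (f : Finset α → ℝ) (c : α → ℝ)
    (φ : Finset α → ℝ) : Prop :=
  (∀ S, 0 ≤ φ S) ∧
  (∀ S, φ S ≤ f S) ∧
  (∀ S, payment f c S ≤ 1 → (1 - (payment f c S).toReal) * f S ≤ φ S) ∧
  (∀ S, ∀ i ∈ S, φ S ≤ f (S.erase i) + φ {i})

/-- `φ` is a BEST objective for the instance `(f, c)` restricted to sets satisfying `P`. -/
def IsBESTOn {α : Type*} [DecidableEq α] (f : Finset α → ℝ) (c : α → ℝ)
    (P : Finset α → Prop) (φ : Finset α → ℝ) : Prop :=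
  (∀ S, P S → 0 ≤ φ S) ∧
  (∀ S, P S → φ S ≤ f S) ∧
  (∀ S, P S → payment f c S ≤ 1 → (1 - (payment f c S).toReal) * f S ≤ φ S) ∧
  (∀ S, P S → ∀ i ∈ S, φ S ≤ f (S.erase i) + φ {i})


section AuxLemmas

variable {α : Type*} [DecidableEq α]

private lemma payment_scale (f : Finset α → ℝ) (c : α → ℝ) (r : ℝ) (hr : 0 ≤ r)
    (T : Finset α) :
    payment f (fun i => r * c i) T = ENNReal.ofReal r * payment f c T := by
  unfold payment
  rw [Finset.mul_sum]
  exact Finset.sum_congr rfl fun i _ => by rw [ENNReal.ofReal_mul hr, mul_div_assoc]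

private lemma payment_singleton (f : Finset α → ℝ) (hf0 : f ∅ = 0) (c : α → ℝ) (i : α) :
    payment f c {i} = ENNReal.ofReal (c i) / ENNReal.ofReal (f {i}) := by
  unfold payment marginal
  rw [Finset.sum_singleton, Finset.erase_singleton, hf0, sub_zero]

private lemma knap_pos (v w : α → ℝ) (κ : ℝ) (hκ : 0 ≤ κ)
    (hv : ∀ i, 0 ≤ v i) :
    ∀ (n : ℕ) (T : Finset α), T.card ≤ n → (∀ i ∈ T, 0 < w i) → (∀ i ∈ T, v i ≤ κ) →
    ∀ μ : ℝ, 0 ≤ μ →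
    ∃ P ⊆ T, (∑ i ∈ P, w i) ≤ μ ∧
      min 1 (μ / ∑ i ∈ T, w i) * (∑ i ∈ T, v i) - κ ≤ ∑ i ∈ P, v i := by
  intro n
  induction n with
  | zero =>
    intro T hT _ _ μ hμ
    have hTe : T = ∅ := card_eq_zero.1 (Nat.le_zero.1 hT)
    subst hTe
    refine ⟨∅, Finset.Subset.refl _, by simpa using hμ, ?_⟩
    simp; linarith
  | succ n ih =>
    intro T hT hw hvκ μ hμ
    by_cases hTμ : (∑ i ∈ T, w i) ≤ μ
    · refine ⟨T, Finset.Subset.refl _, hTμ, ?_⟩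
      have hx : 0 ≤ μ / ∑ i ∈ T, w i :=
        div_nonneg hμ (sum_nonneg fun i hi => (hw i hi).le)
      have hsv : 0 ≤ ∑ i ∈ T, v i := sum_nonneg fun i _ => hv i
      have h1 : min 1 (μ / ∑ i ∈ T, w i) * (∑ i ∈ T, v i) ≤ 1 * (∑ i ∈ T, v i) :=
        mul_le_mul_of_nonneg_right (min_le_left _ _) hsv
      linarith
    · push_neg at hTμ
      have hT0 : 0 < ∑ i ∈ T, w i := lt_of_le_of_lt hμ hTμ
      have hTne : T.Nonempty := by
        rcases T.eq_empty_or_nonempty with h | h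
        · exfalso; rw [h] at hT0; simp at hT0
        · exact h
      obtain ⟨i0, hi0T, hi0max⟩ := T.exists_max_image (fun i => v i / w i) hTne
      have hwi0pos : 0 < w i0 := hw i0 hi0T
      have hmaxavg : ∀ V : Finset α, V ⊆ T →
          (∑ i ∈ V, v i) * w i0 ≤ v i0 * ∑ i ∈ V, w i := by
        intro V hV
        rw [Finset.sum_mul, Finset.mul_sum]
        refine Finset.sum_le_sum fun i hi => ?_
        have h1 := hi0max i (hV hi)
        have h2 := hw i (hV hi)
        rw [div_le_div_iff₀ h2 hwi0pos] at h1
        exact h1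
      have hmin : min 1 (μ / ∑ i ∈ T, w i) = μ / ∑ i ∈ T, w i :=
        min_eq_right (le_of_lt ((div_lt_one hT0).2 hTμ))
      by_cases hwi0 : μ < w i0
      · refine ⟨∅, Finset.empty_subset _, by simpa using hμ, ?_⟩
        rw [hmin]
        have hV := hmaxavg T (Finset.Subset.refl _)
        have hvi0κ := hvκ i0 hi0T
        have hgoal : μ / (∑ i ∈ T, w i) * (∑ i ∈ T, v i) ≤ κ := by
          rw [div_mul_eq_mul_div, div_le_iff₀ hT0]
          have h2 : μ * v i0 ≤ w i0 * κ := by nlinarith [hv i0]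
          have h3 : μ * ((∑ i ∈ T, v i) * w i0) ≤ μ * (v i0 * ∑ i ∈ T, w i) :=
            mul_le_mul_of_nonneg_left hV hμ
          nlinarith [h3, mul_le_mul_of_nonneg_right h2 hT0.le, hwi0pos]
        simp; linarith
      · push_neg at hwi0
        have hcard : (T.erase i0).card ≤ n := by
          have := Finset.card_erase_of_mem hi0T
          omega
        obtain ⟨P', hP'sub, hP'w, hP'v⟩ := ih (T.erase i0) hcard
          (fun i hi => hw i (Finset.erase_subset _ _ hi))
          (fun i hi => hvκ i (Finset.erase_subset _ _ hi))
          (μ - w i0) (by linarith)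
        have hi0P' : i0 ∉ P' := fun h => (Finset.notMem_erase i0 T) (hP'sub h)
        refine ⟨insert i0 P', Finset.insert_subset hi0T
          (hP'sub.trans (Finset.erase_subset _ _)), ?_, ?_⟩
        · rw [Finset.sum_insert hi0P']; linarith
        · rw [Finset.sum_insert hi0P']
          have hse : ∑ i ∈ T.erase i0, w i = (∑ i ∈ T, w i) - w i0 := by
            have := Finset.sum_erase_add T w hi0T; linarith
          have hV' : ∑ i ∈ T.erase i0, v i = (∑ i ∈ T, v i) - v i0 := by
            have := Finset.sum_erase_add T v hi0T; linarith
          set sw := ∑ i ∈ T, w i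
          set sv := ∑ i ∈ T, v i
          have hspos : 0 < sw - w i0 := by
            have h := hTμ; linarith
          have hmin' : min 1 ((μ - w i0) / ∑ i ∈ T.erase i0, w i)
              = (μ - w i0) / (sw - w i0) := by
            rw [hse]
            exact min_eq_right (le_of_lt ((div_lt_one hspos).2 (by linarith)))
          rw [hmin', hV'] at hP'v
          rw [hmin]
          have hkey : (sw - μ) * (v i0 * sw - w i0 * sv) ≥ 0 := by
            have h1 := hmaxavg T (Finset.Subset.refl _)
            nlinarith
          have h5 : μ * sv * (sw - w i0)
              ≤ (v i0 * (sw - w i0) + (μ - w i0) * (sv - v i0)) * sw := by nlinarith [hkey]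
          have e1 : μ / sw * sv
              ≤ (v i0 * (sw - w i0) + (μ - w i0) * (sv - v i0)) / (sw - w i0) := by
            rw [div_mul_eq_mul_div, div_le_div_iff₀ hT0 hspos]; exact h5
          have hR : (μ - w i0) / (sw - w i0) * (sv - v i0)
              = (v i0 * (sw - w i0) + (μ - w i0) * (sv - v i0)) / (sw - w i0) - v i0 := by
            field_simp
            ring
          linarith

private lemma knapsack_select (T : Finset α) (v w : α → ℝ)
    (hv : ∀ i, 0 ≤ v i) (hw : ∀ i, 0 ≤ w i) (W μ κ : ℝ) (hW : 0 < W) (hμ : 0 < μ)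
    (hμW : μ ≤ W) (hκ : 0 ≤ κ) (hvκ : ∀ i ∈ T, v i ≤ κ) (hsum : ∑ i ∈ T, w i ≤ W) :
    ∃ P ⊆ T, (∑ i ∈ P, w i) ≤ μ ∧ μ / W * (∑ i ∈ T, v i) - κ ≤ ∑ i ∈ P, v i := by
  classical
  set Tp := T.filter (fun i => 0 < w i) with hTp
  set Z := T.filter (fun i => ¬ 0 < w i) with hZ
  obtain ⟨P', hP'sub, hP'w, hP'v⟩ := knap_pos v w κ hκ hv Tp.card Tp le_rfl
    (fun i hi => (mem_filter.1 hi).2) (fun i hi => hvκ i (mem_filter.1 hi).1) μ hμ.le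
  have hdisj : Disjoint P' Z :=
    Disjoint.mono_left hP'sub (disjoint_filter_filter_not T T _)
  have hZw : ∑ i ∈ Z, w i = 0 :=
    sum_eq_zero fun i hi => le_antisymm (not_lt.1 (mem_filter.1 hi).2) (hw i)
  have hsplit_v : ∑ i ∈ T, v i = ∑ i ∈ Tp, v i + ∑ i ∈ Z, v i :=
    (sum_filter_add_sum_filter_not T _ v).symm
  have hμW1 : μ / W ≤ 1 := (div_le_one hW).2 hμW
  have ha : μ / W * ∑ i ∈ Tp, v i ≤ min 1 (μ / ∑ i ∈ Tp, w i) * ∑ i ∈ Tp, v i := by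
    rcases Tp.eq_empty_or_nonempty with h | h
    · simp [h]
    · have hsump : 0 < ∑ i ∈ Tp, w i :=
        sum_pos (fun i hi => (mem_filter.1 hi).2) h
      have hsumle : ∑ i ∈ Tp, w i ≤ W :=
        le_trans (sum_le_sum_of_subset_of_nonneg (filter_subset _ _)
          (fun i _ _ => hw i)) hsum
      have hcoef : μ / W ≤ min 1 (μ / ∑ i ∈ Tp, w i) :=
        le_min hμW1 (div_le_div_of_nonneg_left hμ.le hsump hsumle)
      exact mul_le_mul_of_nonneg_right hcoef (sum_nonneg fun i _ => hv i)
  have hb : μ / W * ∑ i ∈ Z, v i ≤ ∑ i ∈ Z, v i :=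
    mul_le_of_le_one_left (sum_nonneg fun i _ => hv i) hμW1
  refine ⟨P' ∪ Z, union_subset (hP'sub.trans (filter_subset _ _)) (filter_subset _ _),
    ?_, ?_⟩
  · rw [sum_union hdisj, hZw]; simpa using hP'w
  · rw [sum_union hdisj, hsplit_v]
    nlinarith [hP'v, ha, hb]

end AuxLemmas

/-- **Reduction from Max-Reward-Light (XOS case).**
The scaled instance lives on the set of light agents `L` (encoded by the predicate
`∀ i ∈ S, isLight f c i`), with the same reward `f` and costs scaled by `B'/B`. -/
theorem reduction_from_mrl_xos {α : Type*} [DecidableEq α] [Fintype α]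
    (f : Finset α → ℝ) (c : α → ℝ) (φ' : Finset α → ℝ)
    (hf01 : ∀ S, f S ∈ Set.Icc (0 : ℝ) 1) (hf0 : f ∅ = 0)
    (hxos : IsXOS f) (hc : ∀ i, 0 ≤ c i)
    (B B' : ℝ) (hB0 : 0 < B) (hB1 : B ≤ 1) (hB'0 : 0 < B') (hB'1 : B' ≤ 1)
    (γ : ℝ) (hγ : 1 ≤ γ)
    (hφ' : IsBESTOn f (fun i => (B' / B) * c i) (fun S => ∀ i ∈ S, isLight f c i) φ')
    (S : Finset α) (hSL : ∀ i ∈ S, isLight f c i)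
    (hSfeas : payment f (fun i => (B' / B) * c i) S ≤ ENNReal.ofReal B')
    (hSapprox :
      maxVal φ' (fun T => (∀ i ∈ T, isLight f c i) ∧
        payment f (fun i => (B' / B) * c i) T ≤ ENNReal.ofReal B') ≤ γ * φ' S) :
    ∃ T : Finset α,
      (∀ i ∈ T, isLight f c i) ∧
      payment f c T ≤ ENNReal.ofReal B ∧
      (T = S ∨ T.card = 1) ∧
      maxVal f (feasibleLight f c B) ≤ 20 * γ * f T := by
  classical
  obtain ⟨k, a, ha0, hfa⟩ := hxos
  obtain ⟨hφ0, hφf, hφprofit, -⟩ := hφ'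
  have hγ0 : (0:ℝ) < γ := lt_of_lt_of_le one_pos hγ
  have hBB : 0 < B' / B := div_pos hB'0 hB0
  have hscale : ∀ T : Finset α, payment f (fun i => B' / B * c i) T
      = ENNReal.ofReal (B' / B) * payment f c T := payment_scale f c _ hBB.le
  have hoBB0 : ENNReal.ofReal (B' / B) ≠ 0 := by
    simp only [ne_eq, ENNReal.ofReal_eq_zero, not_le]; exact hBB
  have hoBBt : ENNReal.ofReal (B' / B) ≠ ⊤ := ENNReal.ofReal_ne_top
  have hBeq : ENNReal.ofReal B' = ENNReal.ofReal (B' / B) * ENNReal.ofReal B := by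
    rw [← ENNReal.ofReal_mul hBB.le]
    congr 1
    field_simp
  have hfeas_iff : ∀ T : Finset α,
      (payment f (fun i => B' / B * c i) T ≤ ENNReal.ofReal B'
        ↔ payment f c T ≤ ENNReal.ofReal B) := by
    intro T
    rw [hscale, hBeq]
    exact ENNReal.mul_le_mul_iff_right hoBB0 hoBBt
  have hpS : payment f c S ≤ ENNReal.ofReal B := (hfeas_iff S).1 hSfeas
  set OPT := maxVal f (feasibleLight f c B) with hOPTdef
  have hbddf : BddAbove (f '' {T | feasibleLight f c B T}) := by
    refine ⟨1, ?_⟩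
    rintro x ⟨V, hV, rfl⟩
    exact (hf01 V).2
  have hOPT0 : 0 ≤ OPT := by
    have hmem : (0:ℝ) ∈ f '' {T | feasibleLight f c B T} := by
      refine ⟨∅, ⟨fun i hi => absurd hi (Finset.notMem_empty i), ?_⟩, hf0⟩
      show payment f c ∅ ≤ _
      simp [payment]
    exact le_csSup hbddf hmem
  by_cases hsing : ∃ i, isLight f c i ∧ payment f c {i} ≤ ENNReal.ofReal B ∧
      OPT ≤ 20 * γ * f {i}
  · obtain ⟨i, h1, h2, h3⟩ := hsing
    exact ⟨{i}, fun j hj => (Finset.mem_singleton.1 hj) ▸ h1, h2,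
      Or.inr (Finset.card_singleton i), h3⟩
  · push_neg at hsing
    refine ⟨S, hSL, hpS, Or.inl rfl, ?_⟩
    have hfS0 : 0 ≤ f S := (hf01 S).1
    have key : ∀ T : Finset α, feasibleLight f c B T →
        f T ≤ 50 / 3 * (γ * f S) + OPT / 6 := by
      intro T hTfeas
      obtain ⟨hTlight, hTpay⟩ := hTfeas
      have hne : (Finset.univ : Finset (Fin (k+1))).Nonempty := Finset.univ_nonempty
      obtain ⟨j, -, hj⟩ := Finset.exists_mem_eq_sup' hne
        (fun j : Fin (k+1) => ∑ i ∈ T, a j i)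
      have hTval : f T = ∑ i ∈ T, a j i := by rw [hfa T, hj]
      have hge : ∀ V : Finset α, (∑ i ∈ V, a j i) ≤ f V := by
        intro V
        rw [hfa V]
        exact Finset.le_sup' (fun j : Fin (k+1) => ∑ i ∈ V, a j i) (Finset.mem_univ j)
      have hgesingle : ∀ i : α, a j i ≤ f {i} := by
        intro i
        have := hge {i}
        simpa using this
      have hpayT_top : payment f c T < ⊤ := lt_of_le_of_lt hTpay ENNReal.ofReal_lt_top
      have hterm_le : ∀ i ∈ T,
          ENNReal.ofReal (c i) / ENNReal.ofReal (marginal f T i) ≤ payment f c T := by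
        intro i hi
        show _ ≤ ∑ i ∈ T, ENNReal.ofReal (c i) / ENNReal.ofReal (marginal f T i)
        exact Finset.single_le_sum
          (f := fun i => ENNReal.ofReal (c i) / ENNReal.ofReal (marginal f T i))
          (fun i _ => zero_le) hi
      have hmarg_le : ∀ i ∈ T, marginal f T i ≤ a j i := by
        intro i hi
        have h1 := hge (T.erase i)
        have h2 : ∑ x ∈ T.erase i, a j x = (∑ x ∈ T, a j x) - a j i := by
          have := Finset.sum_erase_add T (a j) hi; linarith
        show f T - f (T.erase i) ≤ a j i
        rw [hTval]
        rw [h2] at h1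
        linarith
      have hc0 : ∀ i ∈ T, a j i = 0 → c i = 0 := by
        intro i hi hai
        by_contra hci
        have hcpos : 0 < c i := lt_of_le_of_ne (hc i) (Ne.symm hci)
        have hm0 : ENNReal.ofReal (marginal f T i) = 0 := by
          rw [ENNReal.ofReal_eq_zero]
          have := hmarg_le i hi
          linarith
        have htop : ENNReal.ofReal (c i) / ENNReal.ofReal (marginal f T i) = ⊤ := by
          rw [hm0]
          exact ENNReal.div_zero (by simp only [ne_eq, ENNReal.ofReal_eq_zero, not_le]; exact hcpos)
        have := hterm_le i hi
        rw [htop] at this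
        exact absurd (lt_of_le_of_lt this hpayT_top) (lt_irrefl ⊤)
      have hsingle_pay : ∀ i ∈ T, payment f c {i} ≤ ENNReal.ofReal B := by
        intro i hi
        have hm : marginal f T i ≤ f {i} := le_trans (hmarg_le i hi) (hgesingle i)
        have hstep : payment f c {i}
            ≤ ENNReal.ofReal (c i) / ENNReal.ofReal (marginal f T i) := by
          rw [payment_singleton f hf0 c i]
          exact ENNReal.div_le_div (le_refl _) (ENNReal.ofReal_le_ofReal hm)
        exact le_trans (le_trans hstep (hterm_le i hi)) hTpay
      set κ := OPT / (20 * γ) with hκdef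
      have hκ0 : 0 ≤ κ := div_nonneg hOPT0 (by linarith)
      have hsmall : ∀ i ∈ T, f {i} ≤ κ := by
        intro i hi
        have h1 := hsing i (hTlight i hi) (hsingle_pay i hi)
        rw [hκdef, le_div_iff₀ (by linarith : (0:ℝ) < 20 * γ)]
        linarith
      have hvκ : ∀ i ∈ T, a j i ≤ κ := fun i hi => le_trans (hgesingle i) (hsmall i hi)
      have hq_sum : ∑ i ∈ T, c i / a j i ≤ B := by
        have h1 : ∀ i ∈ T, ENNReal.ofReal (c i / a j i)
            ≤ ENNReal.ofReal (c i) / ENNReal.ofReal (marginal f T i) := by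
          intro i hi
          rcases eq_or_lt_of_le (ha0 j i) with h | h
          · rw [hc0 i hi h.symm]
            simp
          · rw [ENNReal.ofReal_div_of_pos h]
            exact ENNReal.div_le_div (le_refl _)
              (ENNReal.ofReal_le_ofReal (hmarg_le i hi))
        have h2 : ENNReal.ofReal (∑ i ∈ T, c i / a j i) ≤ payment f c T := by
          rw [ENNReal.ofReal_sum_of_nonneg (fun i _ => div_nonneg (hc i) (ha0 j i))]
          exact Finset.sum_le_sum h1
        exact (ENNReal.ofReal_le_ofReal_iff hB0.le).1 (le_trans h2 hTpay)
      obtain ⟨P, hPsub, hPw, hPv⟩ := knapsack_select T (a j) (fun i => c i / a j i)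
        (ha0 j) (fun i => div_nonneg (hc i) (ha0 j i)) B (3/10*B) κ hB0
        (by linarith) (by linarith) hκ0 hvκ hq_sum
      have hfrac : (3/10*B)/B = 3/10 := by
        field_simp
      rw [hfrac] at hPv
      obtain ⟨U, hUmem, hUmax⟩ := Finset.exists_max_image P.powerset
        (fun V => f V - 1/2 * ∑ i ∈ V, a j i) ⟨∅, Finset.empty_mem_powerset P⟩
      have hUsub : U ⊆ P := Finset.mem_powerset.1 hUmem
      have hUT : U ⊆ T := hUsub.trans hPsub
      have hUmarg : ∀ i ∈ U, 1/2 * a j i ≤ marginal f U i := by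
        intro i hi
        have h1 := hUmax (U.erase i)
          (Finset.mem_powerset.2 ((Finset.erase_subset i U).trans hUsub))
        have h2 : ∑ x ∈ U.erase i, a j x = (∑ x ∈ U, a j x) - a j i := by
          have := Finset.sum_erase_add U (a j) hi; linarith
        simp only [h2] at h1
        show 1/2 * a j i ≤ f U - f (U.erase i)
        linarith
      have hfU_lb : 1/2 * ∑ i ∈ P, a j i ≤ f U := by
        have h1 := hUmax P (Finset.mem_powerset_self P)
        have h2 := hge P
        have h3 : 0 ≤ ∑ i ∈ U, a j i := sum_nonneg fun i _ => ha0 j i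
        linarith
      have hpayU : payment f c U ≤ ENNReal.ofReal (3/5 * B) := by
        have hterm : ∀ i ∈ U, ENNReal.ofReal (c i) / ENNReal.ofReal (marginal f U i)
            ≤ ENNReal.ofReal (2 * (c i / a j i)) := by
          intro i hi
          by_cases hci : c i = 0
          · simp [hci]
          · have hcpos : 0 < c i := lt_of_le_of_ne (hc i) (Ne.symm hci)
            have hapos : 0 < a j i := by
              rcases eq_or_lt_of_le (ha0 j i) with h | h
              · exact absurd (hc0 i (hUT hi) h.symm) hci
              · exact h
            have hd : (0:ℝ) < 1/2 * a j i := by linarith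
            have e1 : (2 : ℝ) * (c i / a j i) = c i / (1/2 * a j i) := by
              field_simp
            rw [e1, ENNReal.ofReal_div_of_pos hd]
            exact ENNReal.div_le_div (le_refl _)
              (ENNReal.ofReal_le_ofReal (hUmarg i hi))
        have hUsum : ∑ i ∈ U, c i / a j i ≤ ∑ i ∈ P, c i / a j i :=
          Finset.sum_le_sum_of_subset_of_nonneg hUsub
            (fun i _ _ => div_nonneg (hc i) (ha0 j i))
        calc payment f c U ≤ ∑ i ∈ U, ENNReal.ofReal (2 * (c i / a j i)) :=
              Finset.sum_le_sum hterm
          _ = ENNReal.ofReal (∑ i ∈ U, 2 * (c i / a j i)) :=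
              (ENNReal.ofReal_sum_of_nonneg
                (fun i _ => by
                  have := div_nonneg (hc i) (ha0 j i)
                  linarith)).symm
          _ ≤ ENNReal.ofReal (3/5 * B) := ENNReal.ofReal_le_ofReal (by
              rw [← Finset.mul_sum]
              linarith)
      have hpayU_B : payment f c U ≤ ENNReal.ofReal B :=
        le_trans hpayU (ENNReal.ofReal_le_ofReal (by linarith))
      have hpayU' : payment f (fun i => B' / B * c i) U ≤ ENNReal.ofReal B' :=
        (hfeas_iff U).2 hpayU_B
      have hpayU35 : payment f (fun i => B' / B * c i) U ≤ ENNReal.ofReal (3/5) := by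
        rw [hscale]
        calc ENNReal.ofReal (B' / B) * payment f c U
            ≤ ENNReal.ofReal (B' / B) * ENNReal.ofReal (3/5 * B) :=
              mul_le_mul_right hpayU _
          _ = ENNReal.ofReal (B' / B * (3/5 * B)) := (ENNReal.ofReal_mul hBB.le).symm
          _ ≤ ENNReal.ofReal (3/5) := ENNReal.ofReal_le_ofReal (by
              have e2 : B' / B * (3/5 * B) = 3/5 * B' := by field_simp
              rw [e2]; linarith)
      have hpayU1 : payment f (fun i => B' / B * c i) U ≤ 1 :=
        le_trans hpayU35 (by
          rw [← ENNReal.ofReal_one]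
          exact ENNReal.ofReal_le_ofReal (by norm_num))
      have htoReal : (payment f (fun i => B' / B * c i) U).toReal ≤ 3/5 :=
        ENNReal.toReal_le_of_le_ofReal (by norm_num) hpayU35
      have hUlight : ∀ i ∈ U, isLight f c i := fun i hi => hTlight i (hUT hi)
      have hprofit := hφprofit U hUlight hpayU1
      have hφU : 2/5 * f U ≤ φ' U := by
        have h1 : 2/5 * f U
            ≤ (1 - (payment f (fun i => B' / B * c i) U).toReal) * f U :=
          mul_le_mul_of_nonneg_right (by linarith) (hf01 U).1
        linarith
      have hbdd : BddAbove (φ' '' {V | (∀ i ∈ V, isLight f c i) ∧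
          payment f (fun i => B' / B * c i) V ≤ ENNReal.ofReal B'}) := by
        refine ⟨1, ?_⟩
        rintro x ⟨V, hV, rfl⟩
        exact le_trans (hφf V hV.1) (hf01 V).2
      have hle : φ' U ≤ maxVal φ' (fun T => (∀ i ∈ T, isLight f c i) ∧
          payment f (fun i => B' / B * c i) T ≤ ENNReal.ofReal B') :=
        le_csSup hbdd ⟨U, ⟨hUlight, hpayU'⟩, rfl⟩
      have hchain : φ' U ≤ γ * φ' S := le_trans hle hSapprox
      have hφS : φ' S ≤ f S := hφf S hSL
      have hγfS : 2/5 * f U ≤ γ * f S := by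
        have : γ * φ' S ≤ γ * f S := mul_le_mul_of_nonneg_left hφS hγ0.le
        linarith
      rw [← hTval] at hPv
      have hκle : κ ≤ OPT / 20 := by
        rw [hκdef]
        exact div_le_div_of_nonneg_left hOPT0 (by norm_num) (by linarith)
      linarith
    have hsup : OPT ≤ 50 / 3 * (γ * f S) + OPT / 6 := by
      apply Real.sSup_le
      · rintro x ⟨V, hV, rfl⟩
        exact key V hV
      · have h0 : 0 ≤ 50 / 3 * (γ * f S) := by positivity
        linarith
    linarith
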